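/- With the notation of the half-ball reflection (B₂⁺, B₂⁻, D, x ↦ x*, α, α*): if f ∈ C^{α(·)}(closure of B₂⁺), define f*(x) = f(x) for x ∈ B₂⁺ ∪ (B₂ ∩ T) and f*(x) = f(x*) for x ∈ B₂⁻. Then f* ∈ C^{α*(·)}(D) and the weighted seminorm satisfies sup_{x≠y ∈ D} R^{α*(x)} |f*(x)−f*(y)|/|x−y|^{α*(x)} ≤ sup_{x≠y ∈ B₂⁺} R^{α(x)} |f(x)−f(y)|/|x−y|^{α(x)}; consequently |f*|'_{0,α*(·),D} ≤ |f|'_{0,α(·),B₂⁺}. -/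

import Mathlib

open Real Set Metric Filter Topology

noncomputable section

/-- The half-space reflection `x ↦ x* = (x', -xₙ)` in `ℝ^{n+1}`. -/
def reflPt {n : ℕ} (x : EuclideanSpace ℝ (Fin (n + 1))) : EuclideanSpace ℝ (Fin (n + 1)) :=
  (WithLp.equiv 2 (Fin (n + 1) → ℝ)).symm fun j => if j = Fin.last n then -(x j) else x j

/-- `B₂ = B(x₀, 2R)`. -/
def ballB {n : ℕ} (x₀ : EuclideanSpace ℝ (Fin (n + 1))) (R : ℝ) :
    Set (EuclideanSpace ℝ (Fin (n + 1))) := Metric.ball x₀ (2 * R)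

/-- `B₂⁺ = B₂ ∩ ℝⁿ₊`. -/
def upperPart {n : ℕ} (x₀ : EuclideanSpace ℝ (Fin (n + 1))) (R : ℝ) :
    Set (EuclideanSpace ℝ (Fin (n + 1))) := ballB x₀ R ∩ {x | 0 < x (Fin.last n)}

/-- `B₂ ∩ T` where `T = {xₙ = 0}`. -/
def flatPart {n : ℕ} (x₀ : EuclideanSpace ℝ (Fin (n + 1))) (R : ℝ) :
    Set (EuclideanSpace ℝ (Fin (n + 1))) := ballB x₀ R ∩ {x | x (Fin.last n) = 0}

/-- `D = B₂⁺ ∪ B₂⁻ ∪ (B₂ ∩ T)`. -/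
def reflDom {n : ℕ} (x₀ : EuclideanSpace ℝ (Fin (n + 1))) (R : ℝ) :
    Set (EuclideanSpace ℝ (Fin (n + 1))) :=
  upperPart x₀ R ∪ reflPt '' upperPart x₀ R ∪ flatPart x₀ R

/-- The reflected exponent `α*`. -/
def alphaStar {n : ℕ} (α : EuclideanSpace ℝ (Fin (n + 1)) → ℝ)
    (x : EuclideanSpace ℝ (Fin (n + 1))) : ℝ :=
  if 0 ≤ x (Fin.last n) then α x else α (reflPt x)

/-- The reflected function `f*`. -/
def fStar {n : ℕ} (f : EuclideanSpace ℝ (Fin (n + 1)) → ℝ)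
    (x : EuclideanSpace ℝ (Fin (n + 1))) : ℝ :=
  if 0 ≤ x (Fin.last n) then f x else f (reflPt x)

namespace StmtAux

variable {n : ℕ}

lemma reflPt_apply (x : EuclideanSpace ℝ (Fin (n+1))) (j : Fin (n+1)) :
    reflPt x j = if j = Fin.last n then -(x j) else x j := rfl

lemma reflPt_reflPt (x : EuclideanSpace ℝ (Fin (n+1))) : reflPt (reflPt x) = x := by
  ext j; simp [reflPt_apply]; split_ifs <;> simp

lemma norm_reflPt_sub (x y : EuclideanSpace ℝ (Fin (n+1))) :
    ‖reflPt x - reflPt y‖ = ‖x - y‖ := by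
  rw [EuclideanSpace.norm_eq, EuclideanSpace.norm_eq]
  congr 1
  refine Finset.sum_congr rfl fun j _ => ?_
  have h : (reflPt x - reflPt y) j = if j = Fin.last n then -(x j - y j) else x j - y j := by
    simp [reflPt_apply]; split_ifs <;> ring
  rw [h]; split_ifs <;> simp <;> ring

lemma norm_sub_reflPt_le (x y : EuclideanSpace ℝ (Fin (n+1)))
    (hx : 0 ≤ x (Fin.last n)) (hy : y (Fin.last n) < 0) :
    ‖x - reflPt y‖ ≤ ‖x - y‖ := by
  rw [EuclideanSpace.norm_eq, EuclideanSpace.norm_eq]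
  apply Real.sqrt_le_sqrt
  apply Finset.sum_le_sum
  intro j _
  by_cases hj : j = Fin.last n
  · subst hj
    have h1 : (x - reflPt y) (Fin.last n) = x (Fin.last n) + y (Fin.last n) := by
      simp [reflPt_apply]
    have h2 : (x - y) (Fin.last n) = x (Fin.last n) - y (Fin.last n) := by simp
    rw [h1, h2]
    simp only [Real.norm_eq_abs, sq_abs]
    nlinarith [mul_nonneg hx (le_of_lt (neg_pos.mpr hy))]
  · have h1 : (x - reflPt y) j = x j - y j := by simp [reflPt_apply, hj]
    rw [h1]
    simp

lemma flat_subset_closure (x₀ : EuclideanSpace ℝ (Fin (n+1))) (R : ℝ) :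
    flatPart x₀ R ⊆ closure (upperPart x₀ R) := by
  intro x hx
  obtain ⟨hball, hflat⟩ := hx
  have hd : dist x x₀ < 2 * R := hball
  set e : EuclideanSpace ℝ (Fin (n+1)) := EuclideanSpace.single (Fin.last n) (1:ℝ) with he
  have hne : ‖e‖ = 1 := by simp [he]
  have htend : Tendsto (fun t : ℝ => x + t • e) (𝓝[>] 0) (𝓝 x) := by
    have : Tendsto (fun t : ℝ => x + t • e) (𝓝 0) (𝓝 (x + (0:ℝ) • e)) :=
      (tendsto_id.smul_const e).const_add x
    simpa using this.mono_left nhdsWithin_le_nhds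
  have hev : ∀ᶠ t in 𝓝[>] (0:ℝ), (x + t • e) ∈ upperPart x₀ R := by
    have hmem : Set.Ioo (0:ℝ) (2*R - dist x x₀) ∈ 𝓝[>] (0:ℝ) := by
      apply Ioo_mem_nhdsGT_of_mem
      constructor
      · exact le_rfl
      · linarith
    filter_upwards [hmem] with t ht
    constructor
    · have h3 : dist (x + t • e) x₀ ≤ dist (x + t • e) x + dist x x₀ := dist_triangle _ _ _
      have h2 : dist (x + t • e) x = t := by
        simp [dist_eq_norm, norm_smul, hne, abs_of_pos ht.1]
      simp only [ballB, Metric.mem_ball]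
      rw [h2] at h3
      linarith [ht.2]
    · show 0 < (x + t • e) (Fin.last n)
      have h4 : (x + t • e) (Fin.last n) = x (Fin.last n) + t * 1 := by
        simp [he, EuclideanSpace.single_apply]
      rw [h4, hflat]
      simpa using ht.1
  exact mem_closure_of_tendsto htend hev

/-- The continuous folding map `x ↦ (x', |xₙ|)`. -/
def reflAbs {n : ℕ} (x : EuclideanSpace ℝ (Fin (n + 1))) : EuclideanSpace ℝ (Fin (n + 1)) :=
  (WithLp.equiv 2 (Fin (n + 1) → ℝ)).symm fun j => if j = Fin.last n then |x j| else x j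

lemma continuous_reflAbs : Continuous (reflAbs (n := n)) := by
  have hcoord : ∀ j : Fin (n+1), Continuous fun x : EuclideanSpace ℝ (Fin (n+1)) => x j :=
    fun j => (continuous_apply j).comp (PiLp.continuous_ofLp 2 fun _ : Fin (n+1) => ℝ)
  refine ((PiLp.continuous_toLp 2 fun _ : Fin (n+1) => ℝ)).comp ?_
  refine continuous_pi fun j => ?_
  by_cases hj : j = Fin.last n
  · simpa [hj] using (hcoord j).abs
  · simpa [hj] using hcoord j

lemma reflAbs_of_nonneg (x : EuclideanSpace ℝ (Fin (n+1))) (h : 0 ≤ x (Fin.last n)) :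
    reflAbs x = x := by
  ext j
  show (if j = Fin.last n then |x j| else x j) = x j
  split_ifs with hj
  · subst hj; exact abs_of_nonneg h
  · rfl

lemma reflAbs_of_neg (x : EuclideanSpace ℝ (Fin (n+1))) (h : x (Fin.last n) < 0) :
    reflAbs x = reflPt x := by
  ext j
  show (if j = Fin.last n then |x j| else x j) = reflPt x j
  rw [reflPt_apply]
  split_ifs with hj
  · subst hj; exact abs_of_neg h
  · rfl

lemma fStar_eq (f : EuclideanSpace ℝ (Fin (n+1)) → ℝ) :
    fStar f = f ∘ reflAbs := by
  funext x
  by_cases h : 0 ≤ x (Fin.last n)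
  · simp [fStar, h, Function.comp, reflAbs_of_nonneg x h]
  · simp [fStar, h, Function.comp, reflAbs_of_neg x (lt_of_not_ge h)]

end StmtAux

open StmtAux

theorem stmt_3 {n : ℕ} (x₀ : EuclideanSpace ℝ (Fin (n + 1))) (R : ℝ) (hR : 0 < R)
    (hx₀ : 0 ≤ x₀ (Fin.last n))
    (α : EuclideanSpace ℝ (Fin (n + 1)) → ℝ) (αm αp M : ℝ)
    (hαm : 0 < αm) (hαp : αp < 1)
    (hα : ∀ x ∈ upperPart x₀ R ∪ flatPart x₀ R, αm ≤ α x ∧ α x ≤ αp)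
    (hα01 : ∀ x ∈ upperPart x₀ R ∪ flatPart x₀ R, α x ∈ Set.Ioc (0 : ℝ) 1)
    (hlog : ∀ x ∈ upperPart x₀ R ∪ flatPart x₀ R, ∀ y ∈ upperPart x₀ R ∪ flatPart x₀ R,
      x ≠ y → |α x - α y| * |Real.log ‖x - y‖| ≤ M)
    (f : EuclideanSpace ℝ (Fin (n + 1)) → ℝ)
    (hf : ContinuousOn f (closure (upperPart x₀ R))) :
    ContinuousOn (fStar f) (reflDom x₀ R) ∧
    (∀ K : ℝ, (∀ x ∈ upperPart x₀ R, |f x| ≤ K) →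
      ∀ x ∈ reflDom x₀ R, |fStar f x| ≤ K) ∧
    (∀ K : ℝ,
      (∀ x ∈ upperPart x₀ R, ∀ y ∈ upperPart x₀ R, x ≠ y →
        R ^ α x * (|f x - f y| / ‖x - y‖ ^ α x) ≤ K) →
      ∀ x ∈ reflDom x₀ R, ∀ y ∈ reflDom x₀ R, x ≠ y →
        R ^ alphaStar α x * (|fStar f x - fStar f y| / ‖x - y‖ ^ alphaStar α x) ≤ K) := by
  set U := upperPart x₀ R with hU
  set F := flatPart x₀ R with hF
  have hUF_closure : U ∪ F ⊆ closure U :=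
    union_subset subset_closure (flat_subset_closure x₀ R)
  -- classification of points of the domain
  have hD_upper : ∀ x ∈ reflDom x₀ R, 0 ≤ x (Fin.last n) → x ∈ U ∪ F := by
    intro x hx h0
    rcases hx with (hx | hx) | hx
    · exact Or.inl hx
    · obtain ⟨z, hz, rfl⟩ := hx
      exfalso
      have h1 : reflPt z (Fin.last n) = -(z (Fin.last n)) := by simp [reflPt_apply]
      rw [h1] at h0
      have h2 : 0 < z (Fin.last n) := hz.2
      linarith
    · exact Or.inr hx
  have hD_lower : ∀ x ∈ reflDom x₀ R, x (Fin.last n) < 0 → reflPt x ∈ U := by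
    intro x hx h0
    rcases hx with (hx | hx) | hx
    · exact absurd hx.2 (not_lt.2 h0.le)
    · obtain ⟨z, hz, rfl⟩ := hx
      rwa [reflPt_reflPt]
    · exact absurd hx.2 (by intro h; rw [h] at h0; exact lt_irrefl _ h0)
  -- continuity of f within U at points of U ∪ F
  have hftend : ∀ x ∈ U ∪ F, Tendsto f (𝓝[U] x) (𝓝 (f x)) := fun x hx =>
    (hf.continuousWithinAt (hUF_closure hx)).mono_left (nhdsWithin_mono x subset_closure)
  have hNeBot : ∀ x ∈ U ∪ F, (𝓝[U] x).NeBot := fun x hx =>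
    mem_closure_iff_nhdsWithin_neBot.mp (hUF_closure hx)
  -- continuity of α within U at points of U ∪ F, from the log-Hölder condition
  have αtend : ∀ x ∈ U ∪ F, Tendsto α (𝓝[U] x) (𝓝 (α x)) := by
    intro x hx
    rw [Metric.tendsto_nhdsWithin_nhds]
    intro ε hε
    refine ⟨Real.exp (-((|M| + 1)/ε)), Real.exp_pos _, ?_⟩
    intro z hzU hdist
    by_cases hzx : z = x
    · simpa [hzx] using hε
    have h0 : 0 < dist z x := dist_pos.2 hzx
    have hlt : Real.log (dist z x) < -((|M|+1)/ε) := by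
      calc Real.log (dist z x) < Real.log (Real.exp (-((|M|+1)/ε))) :=
            Real.log_lt_log h0 hdist
        _ = -((|M|+1)/ε) := Real.log_exp _
    have hMpos : 0 < (|M|+1)/ε := by positivity
    have hlogabs : (|M|+1)/ε < |Real.log ‖z - x‖| := by
      rw [← dist_eq_norm, abs_of_neg (show Real.log (dist z x) < 0 by linarith)]
      linarith
    have hL : 0 < |Real.log ‖z - x‖| := lt_trans hMpos hlogabs
    have hprod : |α z - α x| * |Real.log ‖z - x‖| ≤ M := hlog z (Or.inl hzU) x hx hzx
    have h1 : |α z - α x| ≤ |M| / |Real.log ‖z - x‖| :=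
      (le_div_iff₀ hL).2 (hprod.trans (le_abs_self M))
    have h2 : (|M|+1)/ε * ε < |Real.log ‖z - x‖| * ε :=
      mul_lt_mul_of_pos_right hlogabs hε
    rw [div_mul_cancel₀ _ (ne_of_gt hε)] at h2
    have h3 : |M| / |Real.log ‖z - x‖| < ε := by
      rw [div_lt_iff₀ hL]
      nlinarith
    rw [Real.dist_eq]
    linarith
  -- continuity part
  have hcont : ContinuousOn (fStar f) (reflDom x₀ R) := by
    rw [fStar_eq]
    apply hf.comp continuous_reflAbs.continuousOn
    intro x hx
    by_cases h0 : 0 ≤ x (Fin.last n)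
    · rw [reflAbs_of_nonneg x h0]
      exact hUF_closure (hD_upper x hx h0)
    · rw [reflAbs_of_neg x (lt_of_not_ge h0)]
      exact subset_closure (hD_lower x hx (lt_of_not_ge h0))
  refine ⟨hcont, ?_, ?_⟩
  · -- sup bound
    intro K hK x hx
    by_cases h0 : 0 ≤ x (Fin.last n)
    · have hxUF := hD_upper x hx h0
      rw [fStar, if_pos h0]
      rcases hxUF with hxU | hxF
      · exact hK x hxU
      · haveI := hNeBot x (Or.inr hxF)
        refine le_of_tendsto ((hftend x (Or.inr hxF)).abs) ?_
        filter_upwards [self_mem_nhdsWithin] with z hz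
        exact hK z hz
    · rw [fStar, if_neg h0]
      exact hK _ (hD_lower x hx (lt_of_not_ge h0))
  · -- Hölder bound
    intro K hK
    -- K is nonnegative
    have hK0 : 0 ≤ K := by
      set e : EuclideanSpace ℝ (Fin (n+1)) := EuclideanSpace.single (Fin.last n) (1:ℝ) with he
      set p : ℝ → EuclideanSpace ℝ (Fin (n+1)) := fun t => x₀ + t • e with hp
      have hpmem : ∀ t : ℝ, 0 < t → t < 2*R → p t ∈ U := by
        intro t ht h2t
        constructor
        · show dist (p t) x₀ < 2 * R
          have : dist (p t) x₀ = t := by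
            simp [hp, dist_eq_norm, norm_smul, he, abs_of_pos ht]
          rw [this]; exact h2t
        · show 0 < (p t) (Fin.last n)
          have : (p t) (Fin.last n) = x₀ (Fin.last n) + t * 1 := by
            simp [hp, he, EuclideanSpace.single_apply]
          rw [this]
          nlinarith
      have hne : p R ≠ p (R/2) := by
        intro h
        have h1 : (p R) (Fin.last n) = (p (R/2)) (Fin.last n) := by rw [h]
        have h2 : (p R) (Fin.last n) = x₀ (Fin.last n) + R * 1 := by
          simp [hp, he, EuclideanSpace.single_apply]
        have h3 : (p (R/2)) (Fin.last n) = x₀ (Fin.last n) + (R/2) * 1 := by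
          simp [hp, he, EuclideanSpace.single_apply]
        rw [h2, h3] at h1
        linarith
      have := hK (p R) (hpmem R hR (by linarith)) (p (R/2))
        (hpmem (R/2) (by linarith) (by linarith)) hne
      refine le_trans ?_ this
      exact mul_nonneg (Real.rpow_nonneg hR.le _)
        (div_nonneg (abs_nonneg _) (Real.rpow_nonneg (norm_nonneg _) _))
    -- Step 1 : extend to x ∈ U, y ∈ U ∪ F
    have step1 : ∀ x ∈ U, ∀ y ∈ U ∪ F, x ≠ y →
        R ^ α x * (|f x - f y| / ‖x - y‖ ^ α x) ≤ K := by
      intro x hxU y hy hxy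
      rcases hy with hyU | hyF
      · exact hK x hxU y hyU hxy
      haveI := hNeBot y (Or.inr hyF)
      have hid : Tendsto (fun z : EuclideanSpace ℝ (Fin (n+1)) => z) (𝓝[U] y) (𝓝 y) :=
        tendsto_id.mono_left nhdsWithin_le_nhds
      have hxyn : (0:ℝ) < ‖x - y‖ := by
        rw [norm_sub_pos_iff]; exact hxy
      have hnorm : Tendsto (fun z => ‖x - z‖) (𝓝[U] y) (𝓝 ‖x - y‖) :=
        (tendsto_const_nhds.sub hid).norm
      have hden : Tendsto (fun z => ‖x - z‖ ^ α x) (𝓝[U] y) (𝓝 (‖x - y‖ ^ α x)) :=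
        hnorm.rpow tendsto_const_nhds (Or.inl hxyn.ne')
      have hdenne : (‖x - y‖ ^ α x) ≠ 0 := (Real.rpow_pos_of_pos hxyn _).ne'
      have hnum : Tendsto (fun z => |f x - f z|) (𝓝[U] y) (𝓝 |f x - f y|) :=
        (tendsto_const_nhds.sub (hftend y (Or.inr hyF))).abs
      have hQ : Tendsto (fun z => R ^ α x * (|f x - f z| / ‖x - z‖ ^ α x)) (𝓝[U] y)
          (𝓝 (R ^ α x * (|f x - f y| / ‖x - y‖ ^ α x))) :=
        tendsto_const_nhds.mul (hnum.div hden hdenne)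
      refine le_of_tendsto hQ ?_
      have hball : Metric.ball y (dist x y) ∈ 𝓝[U] y :=
        mem_nhdsWithin_of_mem_nhds (Metric.ball_mem_nhds y (dist_pos.2 hxy))
      filter_upwards [self_mem_nhdsWithin, hball] with z hzU hzb
      have hzx : x ≠ z := by
        intro h
        rw [← h, Metric.mem_ball] at hzb
        rw [dist_comm] at hzb
        exact lt_irrefl _ hzb
      exact hK x hxU z hzU hzx
    -- Step 2 : extend to x ∈ U ∪ F
    have step2 : ∀ x ∈ U ∪ F, ∀ y ∈ U ∪ F, x ≠ y →
        R ^ α x * (|f x - f y| / ‖x - y‖ ^ α x) ≤ K := by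
      intro x hx y hy hxy
      rcases hx with hxU | hxF
      · exact step1 x hxU y hy hxy
      haveI := hNeBot x (Or.inr hxF)
      have hid : Tendsto (fun z : EuclideanSpace ℝ (Fin (n+1)) => z) (𝓝[U] x) (𝓝 x) :=
        tendsto_id.mono_left nhdsWithin_le_nhds
      have hα' : Tendsto α (𝓝[U] x) (𝓝 (α x)) := αtend x (Or.inr hxF)
      have hxyn : (0:ℝ) < ‖x - y‖ := by
        rw [norm_sub_pos_iff]; exact hxy
      have hRpow : Tendsto (fun z => R ^ α z) (𝓝[U] x) (𝓝 (R ^ α x)) :=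
        tendsto_const_nhds.rpow hα' (Or.inl hR.ne')
      have hnorm : Tendsto (fun z => ‖z - y‖) (𝓝[U] x) (𝓝 ‖x - y‖) :=
        (hid.sub tendsto_const_nhds).norm
      have hden : Tendsto (fun z => ‖z - y‖ ^ α z) (𝓝[U] x) (𝓝 (‖x - y‖ ^ α x)) :=
        hnorm.rpow hα' (Or.inl hxyn.ne')
      have hdenne : (‖x - y‖ ^ α x) ≠ 0 := (Real.rpow_pos_of_pos hxyn _).ne'
      have hnum : Tendsto (fun z => |f z - f y|) (𝓝[U] x) (𝓝 |f x - f y|) :=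
        ((hftend x (Or.inr hxF)).sub tendsto_const_nhds).abs
      have hQ : Tendsto (fun z => R ^ α z * (|f z - f y| / ‖z - y‖ ^ α z)) (𝓝[U] x)
          (𝓝 (R ^ α x * (|f x - f y| / ‖x - y‖ ^ α x))) :=
        hRpow.mul (hnum.div hden hdenne)
      refine le_of_tendsto hQ ?_
      have hball : Metric.ball x (dist y x) ∈ 𝓝[U] x :=
        mem_nhdsWithin_of_mem_nhds (Metric.ball_mem_nhds x (dist_pos.2 (Ne.symm hxy)))
      filter_upwards [self_mem_nhdsWithin, hball] with z hzU hzb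
      have hzy : z ≠ y := by
        intro h
        rw [h, Metric.mem_ball] at hzb
        exact lt_irrefl _ hzb
      exact step1 z hzU y hy hzy
    -- final case analysis
    intro x hx y hy hxy
    by_cases hx0 : 0 ≤ x (Fin.last n) <;> by_cases hy0 : 0 ≤ y (Fin.last n)
    · -- both upper
      simp only [alphaStar, fStar, if_pos hx0, if_pos hy0]
      exact step2 x (hD_upper x hx hx0) y (hD_upper y hy hy0) hxy
    · -- x upper, y lower
      have hy0' : y (Fin.last n) < 0 := lt_of_not_ge hy0
      simp only [alphaStar, fStar, if_pos hx0, if_neg hy0]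
      have hyU : reflPt y ∈ U := hD_lower y hy hy0'
      by_cases hxy' : x = reflPt y
      · rw [hxy', sub_self, abs_zero, zero_div, mul_zero]
        exact hK0
      · have hle : ‖x - reflPt y‖ ≤ ‖x - y‖ := norm_sub_reflPt_le x y hx0 hy0'
        have hαpos : 0 < α x := (hα01 x (hD_upper x hx hx0)).1
        have h1 : (0:ℝ) < ‖x - reflPt y‖ := by rw [norm_sub_pos_iff]; exact hxy'
        have h2 : ‖x - reflPt y‖ ^ α x ≤ ‖x - y‖ ^ α x :=
          Real.rpow_le_rpow h1.le hle hαpos.le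
        have h3 : (0:ℝ) < ‖x - reflPt y‖ ^ α x := Real.rpow_pos_of_pos h1 _
        have hdiv : |f x - f (reflPt y)| / ‖x - y‖ ^ α x ≤
            |f x - f (reflPt y)| / ‖x - reflPt y‖ ^ α x :=
          div_le_div_of_nonneg_left (abs_nonneg _) h3 h2
        calc R ^ α x * (|f x - f (reflPt y)| / ‖x - y‖ ^ α x)
            ≤ R ^ α x * (|f x - f (reflPt y)| / ‖x - reflPt y‖ ^ α x) :=
              mul_le_mul_of_nonneg_left hdiv (Real.rpow_nonneg hR.le _)
          _ ≤ K := step2 x (hD_upper x hx hx0) (reflPt y) (Or.inl hyU) hxy'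
    · -- x lower, y upper
      have hx0' : x (Fin.last n) < 0 := lt_of_not_ge hx0
      simp only [alphaStar, fStar, if_neg hx0, if_pos hy0]
      have hxU : reflPt x ∈ U := hD_lower x hx hx0'
      by_cases hxy' : reflPt x = y
      · rw [hxy', sub_self, abs_zero, zero_div, mul_zero]
        exact hK0
      · have hle : ‖reflPt x - y‖ ≤ ‖x - y‖ := by
          have := norm_sub_reflPt_le y x hy0 hx0'
          rwa [norm_sub_rev, norm_sub_rev y x] at this
        have hαpos : 0 < α (reflPt x) := (hα01 _ (Or.inl hxU)).1
        have h1 : (0:ℝ) < ‖reflPt x - y‖ := by rw [norm_sub_pos_iff]; exact hxy'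
        have h2 : ‖reflPt x - y‖ ^ α (reflPt x) ≤ ‖x - y‖ ^ α (reflPt x) :=
          Real.rpow_le_rpow h1.le hle hαpos.le
        have h3 : (0:ℝ) < ‖reflPt x - y‖ ^ α (reflPt x) := Real.rpow_pos_of_pos h1 _
        have hdiv : |f (reflPt x) - f y| / ‖x - y‖ ^ α (reflPt x) ≤
            |f (reflPt x) - f y| / ‖reflPt x - y‖ ^ α (reflPt x) :=
          div_le_div_of_nonneg_left (abs_nonneg _) h3 h2
        calc R ^ α (reflPt x) * (|f (reflPt x) - f y| / ‖x - y‖ ^ α (reflPt x))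
            ≤ R ^ α (reflPt x) * (|f (reflPt x) - f y| / ‖reflPt x - y‖ ^ α (reflPt x)) :=
              mul_le_mul_of_nonneg_left hdiv (Real.rpow_nonneg hR.le _)
          _ ≤ K := step2 (reflPt x) (Or.inl hxU) y (hD_upper y hy hy0) hxy'
    · -- both lower
      have hx0' : x (Fin.last n) < 0 := lt_of_not_ge hx0
      have hy0' : y (Fin.last n) < 0 := lt_of_not_ge hy0
      simp only [alphaStar, fStar, if_neg hx0, if_neg hy0]
      have hxU : reflPt x ∈ U := hD_lower x hx hx0'
      have hyU : reflPt y ∈ U := hD_lower y hy hy0'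
      have hne : reflPt x ≠ reflPt y := by
        intro h
        apply hxy
        rw [← reflPt_reflPt x, h, reflPt_reflPt]
      have heq : ‖x - y‖ = ‖reflPt x - reflPt y‖ := (norm_reflPt_sub x y).symm
      rw [heq]
      exact step2 (reflPt x) (Or.inl hxU) (reflPt y) (Or.inl hyU) hne
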